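/- Let n be a positive integer and let k be an integer with C(k,2) ≤ n ≤ C(k+1,2), where C(a,b) denotes the binomial coefficient. Then the maximum of raj(w) − inv(w) over all permutations w of {1,…,n} equals C(n+1,2) − k·n + C(k+1,3). Moreover, this maximum is attained exactly at the layered permutations e_{(α_1,…,α_k)} for sequences (α_1,…,α_k) with j−1 ≤ α_j ≤ j for all 1 ≤ j ≤ k and Σ_{j=1}^k α_j = n (where the value α_1 = 0 is permitted, the corresponding layered permutation being the one with block sizes α_2,…,α_k). -/

import Mathlib

open scoped Classical

noncomputable section

namespace RajRegularity

variable {n : ℕ}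

/-- Maximal length of an increasing subsequence of `w(i), …, w(n)` beginning with `w(i)`:
the largest cardinality of a set `s` of positions that contains `i`, consists of positions
`≥ i`, and on which `w` is strictly increasing. -/
def lisFrom (w : Equiv.Perm (Fin n)) (i : Fin n) : ℕ :=
  (Finset.univ.filter fun s : Finset (Fin n) =>
      i ∈ s ∧ (∀ j ∈ s, i ≤ j) ∧ ∀ j ∈ s, ∀ k ∈ s, j < k → w j < w k).sup Finset.card

/-- `rajCode w i = (n − i + 1) −` (maximal length of an increasing subsequence of
`w(i), …, w(n)` beginning with `w(i)`); here positions are 0-based, so the number of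
positions `≥ i` is `n - i`. -/
def rajCode (w : Equiv.Perm (Fin n)) (i : Fin n) : ℕ :=
  (n - (i : ℕ)) - lisFrom w i

/-- The Rajchgot index `raj w = Σᵢ rajCode w i`. -/
def raj (w : Equiv.Perm (Fin n)) : ℕ := ∑ i, rajCode w i

/-- The number of inversions of `w`: pairs of positions `i < j` with `w i > w j`. -/
def invNum (w : Equiv.Perm (Fin n)) : ℕ :=
  (Finset.univ.filter fun p : Fin n × Fin n => p.1 < p.2 ∧ w p.2 < w p.1).card

/-- The `i`-th entry of the inv code: `ℓ_i(w) = #{ j : i < j, w j < w i }`. -/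
def ellCode (w : Equiv.Perm (Fin n)) (i : Fin n) : ℕ :=
  (Finset.univ.filter fun j : Fin n => i < j ∧ w j < w i).card

/-- The set of descent positions of `w` (0-based position `j` with `w j > w (j+1)`). -/
def descents (w : Equiv.Perm (Fin n)) : Finset (Fin n) :=
  Finset.univ.filter fun j : Fin n =>
    if h : (j : ℕ) + 1 < n then w ⟨(j : ℕ) + 1, h⟩ < w j else False

/-- The major index: the sum of the (1-based) descent positions of `w`. -/
def maj (w : Equiv.Perm (Fin n)) : ℕ := ∑ j ∈ descents w, ((j : ℕ) + 1)

/-- `mCode w i`: the number of descents of `w` at positions `≥ i`. -/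
def mCode (w : Equiv.Perm (Fin n)) (i : Fin n) : ℕ :=
  ((descents w).filter fun j => i ≤ j).card

/-- `w` is dominant iff it avoids the pattern 132. -/
def Dominant (w : Equiv.Perm (Fin n)) : Prop :=
  ¬ ∃ i j k : Fin n, i < j ∧ j < k ∧ w i < w k ∧ w k < w j

/-- `w` is fireworks iff there are no positions `i < j` with `w j < w (j+1) < w i`. -/
def Fireworks (w : Equiv.Perm (Fin n)) : Prop :=
  ¬ ∃ (i j : Fin n) (h : (j : ℕ) + 1 < n),
      i < j ∧ w j < w ⟨(j : ℕ) + 1, h⟩ ∧ w ⟨(j : ℕ) + 1, h⟩ < w i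

/-- `w` is inverse fireworks iff `w⁻¹` is fireworks. -/
def InvFireworks (w : Equiv.Perm (Fin n)) : Prop := Fireworks w⁻¹

/-- `w` is a valley permutation: for some `a`, it is strictly decreasing on positions `≤ a`
and strictly increasing on positions `≥ a`. -/
def Valley (w : Equiv.Perm (Fin n)) : Prop :=
  ∃ a : ℕ, (∀ i j : Fin n, i < j → (j : ℕ) ≤ a → w j < w i) ∧
    ∀ i j : Fin n, a ≤ (i : ℕ) → i < j → w i < w j

/-- `eps w i` is the (1-based) blob index `ε_i(w) = i + r_i(w)`. -/
def eps (w : Equiv.Perm (Fin n)) (i : Fin n) : ℕ := (i : ℕ) + 1 + rajCode w i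

/-- The shape of `w`: `α_k(w) = #{ i : ε_i(w) = k }` (here `k : Fin n` stands for the
1-based index `k + 1`). -/
def shape (w : Equiv.Perm (Fin n)) : Fin n → ℕ := fun k =>
  (Finset.univ.filter fun i : Fin n => eps w i = (k : ℕ) + 1).card

/-- Dominance order on shapes: `α ⪰ β` iff every tail sum of `α` is at least the
corresponding tail sum of `β`. -/
def Dominates (α β : Fin n → ℕ) : Prop :=
  ∀ m : Fin n,
    ∑ k ∈ Finset.univ.filter (fun k : Fin n => m ≤ k), β k ≤
      ∑ k ∈ Finset.univ.filter (fun k : Fin n => m ≤ k), α k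

/-- Right weak order: `u ≤_R w` iff `w = u * v` length-additively. -/
def leR (u w : Equiv.Perm (Fin n)) : Prop :=
  ∃ v : Equiv.Perm (Fin n), w = u * v ∧ invNum w = invNum u + invNum v

/-- Left weak order: `u ≤_L w` iff `w = v * u` length-additively. -/
def leL (u w : Equiv.Perm (Fin n)) : Prop :=
  ∃ v : Equiv.Perm (Fin n), w = v * u ∧ invNum w = invNum v + invNum u

/-- Two-sided weak order: the transitive closure of the union of left and right weak
orders (both are reflexive, so we may use the reflexive-transitive closure). -/
def leLR (u w : Equiv.Perm (Fin n)) : Prop :=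
  Relation.ReflTransGen (fun a b : Equiv.Perm (Fin n) => leL a b ∨ leR a b) u w

/-- The maximum of the block of the set partition `π(w)` containing the value `v`;
the block of `v` is `{ v' : ε_{w⁻¹ v'}(w) = ε_{w⁻¹ v}(w) }`. -/
def blockMax (w : Equiv.Perm (Fin n)) (v : Fin n) : ℕ :=
  ((Finset.univ.filter fun v' : Fin n => eps w (w⁻¹ v') = eps w (w⁻¹ v)).max'
      ⟨v, Finset.mem_filter.mpr ⟨Finset.mem_univ v, rfl⟩⟩).val

/-- The fireworks map `Φ`: the one-line word of `Φ w` lists the blocks of `π(w)` in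
increasing order of their maxima, each block written in decreasing order.  Equivalently,
`Φ w` sorts the values by the key (max of block, value reversed), lexicographically. -/
def Phi (w : Equiv.Perm (Fin n)) : Equiv.Perm (Fin n) :=
  Tuple.sort fun v : Fin n => n * blockMax w v + (n - 1 - (v : ℕ))

/-- The inverse fireworks map `Φ_inv w = Φ(w⁻¹)⁻¹`. -/
def PhiInv (w : Equiv.Perm (Fin n)) : Equiv.Perm (Fin n) := (Phi w⁻¹)⁻¹

/-- Partial sums of a sequence of block sizes. -/
def psum (a : ℕ → ℕ) (m : ℕ) : ℕ := ∑ j ∈ Finset.range m, a j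

/-- The index of the block (interval `[psum a m, psum a (m+1))`) containing the value `v`. -/
def blockIdx (n : ℕ) (a : ℕ → ℕ) (v : Fin n) : ℕ :=
  ((Finset.range n).filter fun m => psum a (m + 1) ≤ (v : ℕ)).card

/-- The layered permutation with block sizes `a 0, a 1, …`: it reverses each of the
consecutive intervals `[psum a m, psum a (m+1))` of `{0, …, n-1}`.  Equivalently, its
one-line word sorts the values by (block index, value reversed) lexicographically. -/
def layered (n : ℕ) (a : ℕ → ℕ) : Equiv.Perm (Fin n) :=
  Tuple.sort fun v : Fin n => n * blockIdx n a v + (n - 1 - (v : ℕ))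

/-- The layered permutation `e_α` associated to a shape `α : Fin n → ℕ`. -/
def eOf (α : Fin n → ℕ) : Equiv.Perm (Fin n) :=
  layered n fun m => if h : m < n then α ⟨m, h⟩ else 0


/-! ### Basic facts about `lisFrom` -/

def goodSet (w : Equiv.Perm (Fin n)) (i : Fin n) (s : Finset (Fin n)) : Prop :=
  i ∈ s ∧ (∀ j ∈ s, i ≤ j) ∧ ∀ j ∈ s, ∀ k ∈ s, j < k → w j < w k

lemma lisFrom_eq_sup (w : Equiv.Perm (Fin n)) (i : Fin n) :
    lisFrom w i = (Finset.univ.filter (goodSet w i)).sup Finset.card := by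
  unfold lisFrom goodSet
  congr!

lemma goodSet_singleton (w : Equiv.Perm (Fin n)) (i : Fin n) : goodSet w i {i} := by
  refine ⟨Finset.mem_singleton_self i, ?_, ?_⟩
  · intro j hj; rw [Finset.mem_singleton] at hj; exact hj ▸ le_rfl
  · intro j hj k hk hjk
    rw [Finset.mem_singleton] at hj hk
    rw [hj, hk] at hjk; exact absurd hjk (lt_irrefl _)

lemma card_le_lisFrom {w : Equiv.Perm (Fin n)} {i : Fin n} {s : Finset (Fin n)}
    (hs : goodSet w i s) : s.card ≤ lisFrom w i := by
  rw [lisFrom_eq_sup]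
  exact Finset.le_sup (Finset.mem_filter.mpr ⟨Finset.mem_univ _, hs⟩)

lemma one_le_lisFrom (w : Equiv.Perm (Fin n)) (i : Fin n) : 1 ≤ lisFrom w i := by
  simpa using card_le_lisFrom (goodSet_singleton w i)

lemma exists_goodSet (w : Equiv.Perm (Fin n)) (i : Fin n) :
    ∃ s : Finset (Fin n), goodSet w i s ∧ s.card = lisFrom w i := by
  rw [lisFrom_eq_sup]
  obtain ⟨s, hs, hcard⟩ := Finset.exists_mem_eq_sup
    (Finset.univ.filter (goodSet w i))
    ⟨{i}, Finset.mem_filter.mpr ⟨Finset.mem_univ _, goodSet_singleton w i⟩⟩ Finset.card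
  exact ⟨s, (Finset.mem_filter.mp hs).2, hcard.symm⟩

lemma lisFrom_le (w : Equiv.Perm (Fin n)) (i : Fin n) : lisFrom w i ≤ n - (i : ℕ) := by
  obtain ⟨s, hs, hcard⟩ := exists_goodSet w i
  rw [← hcard]
  have : s ⊆ Finset.Ici i := fun j hj => Finset.mem_Ici.mpr (hs.2.1 j hj)
  calc s.card ≤ (Finset.Ici i).card := Finset.card_le_card this
    _ = n - (i : ℕ) := by
        have : (Finset.Ici i).card = n - (i : ℕ) := by
          simpa using Fin.card_Ici i
        exact this

lemma lisFrom_lt {w : Equiv.Perm (Fin n)} {i j : Fin n} (hij : i < j) (hw : w i < w j) :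
    lisFrom w j < lisFrom w i := by
  obtain ⟨s, hs, hcard⟩ := exists_goodSet w j
  have hins : goodSet w i (insert i s) := by
    refine ⟨Finset.mem_insert_self i s, ?_, ?_⟩
    · intro x hx
      rcases Finset.mem_insert.mp hx with h | h
      · exact h ▸ le_rfl
      · exact le_of_lt (lt_of_lt_of_le hij (hs.2.1 x h))
    · intro x hx y hy hxy
      rcases Finset.mem_insert.mp hx with h | h
      · subst h
        rcases Finset.mem_insert.mp hy with h' | h'
        · exact absurd (h' ▸ hxy) (lt_irrefl x)
        · rcases eq_or_lt_of_le (hs.2.1 y h') with h'' | h''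
          · exact h'' ▸ hw
          · exact lt_trans hw (hs.2.2 j hs.1 y h' h'')
      · rcases Finset.mem_insert.mp hy with h' | h'
        · exact absurd (lt_of_le_of_lt (le_of_lt (lt_of_lt_of_le hij (hs.2.1 x h))) (h' ▸ hxy))
            (lt_irrefl i)
        · exact hs.2.2 x h y h' hxy
  have hni : i ∉ s := fun h => absurd (hs.2.1 i h) (not_le.mpr hij)
  calc lisFrom w j = s.card := hcard.symm
    _ < (insert i s).card := by rw [Finset.card_insert_of_notMem hni]; omega
    _ ≤ lisFrom w i := card_le_lisFrom hins

lemma same_level_inv {w : Equiv.Perm (Fin n)} {i j : Fin n} (hij : i < j)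
    (hL : lisFrom w i = lisFrom w j) : w j < w i := by
  rcases lt_trichotomy (w i) (w j) with h | h | h
  · exact absurd hL (ne_of_gt (lisFrom_lt hij h))
  · exact absurd (w.injective h) (ne_of_lt hij)
  · exact h

lemma diff_level_pos {w : Equiv.Perm (Fin n)} {i j : Fin n} (hij : i < j)
    (hL : lisFrom w i ≠ lisFrom w j) (hinv : ¬ (w j < w i)) : lisFrom w j < lisFrom w i := by
  rcases lt_trichotomy (w i) (w j) with h | h | h
  · exact lisFrom_lt hij h
  · exact absurd (w.injective h) (ne_of_lt hij)
  · exact absurd h hinv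

/-! ### raj formula -/

lemma rajCode_int (w : Equiv.Perm (Fin n)) (i : Fin n) :
    (rajCode w i : ℤ) = ((n : ℤ) - (i : ℕ)) - lisFrom w i := by
  unfold rajCode
  have h1 : lisFrom w i ≤ n - (i : ℕ) := lisFrom_le w i
  have h2 : (i : ℕ) ≤ n := le_of_lt i.isLt
  push_cast [Nat.cast_sub h1, Nat.cast_sub h2]
  ring

lemma sum_range_sub (n : ℕ) : ∑ i : Fin n, (n - (i : ℕ)) = (n + 1).choose 2 := by
  rw [Fin.sum_univ_eq_sum_range (fun i => n - i) n]
  rw [← Finset.sum_range_reflect]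
  have : ∀ j ∈ Finset.range n, n - (n - 1 - j) = j + 1 := by
    intro j hj; rw [Finset.mem_range] at hj; omega
  rw [Finset.sum_congr rfl this]
  have := Finset.sum_range_id_mul_two (n + 1)
  rw [Nat.choose_two_right]
  rw [Finset.sum_range_succ'] at this
  omega

lemma raj_int (w : Equiv.Perm (Fin n)) :
    (raj w : ℤ) = ((n + 1).choose 2 : ℤ) - ∑ i, (lisFrom w i : ℤ) := by
  unfold raj
  push_cast
  rw [Finset.sum_congr rfl (fun i _ => rajCode_int w i), Finset.sum_sub_distrib]
  congr 1
  calc ∑ x : Fin n, ((n : ℤ) - (x : ℕ))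
      = ∑ x : Fin n, (((n - (x : ℕ) : ℕ) : ℕ) : ℤ) := by
        refine Finset.sum_congr rfl fun x _ => ?_
        have hx : (x : ℕ) ≤ n := le_of_lt x.isLt
        push_cast [Nat.cast_sub hx]
        ring
    _ = (((n + 1).choose 2 : ℕ) : ℤ) := by rw [← Nat.cast_sum, sum_range_sub n]

/-! ### level counts -/

def levCount (w : Equiv.Perm (Fin n)) (t : ℕ) : ℕ :=
  (Finset.univ.filter fun i : Fin n => lisFrom w i = t + 1).card

lemma lisFrom_le_n (w : Equiv.Perm (Fin n)) (i : Fin n) : lisFrom w i ≤ n :=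
  le_trans (lisFrom_le w i) (Nat.sub_le _ _)

lemma sum_levCount (w : Equiv.Perm (Fin n)) (hn : 0 < n) :
    ∑ t ∈ Finset.range n, levCount w t = n := by
  have := Finset.card_eq_sum_card_fiberwise
    (f := fun i : Fin n => lisFrom w i - 1) (s := Finset.univ) (t := Finset.range n)
    (by intro i _
        show lisFrom w i - 1 ∈ Finset.range n
        rw [Finset.mem_range]
        have := lisFrom_le_n w i
        have := one_le_lisFrom w i
        omega)
  rw [Finset.card_univ, Fintype.card_fin] at this
  beta_reduce at this
  refine Eq.trans ?_ this.symm
  refine Finset.sum_congr rfl fun t _ => ?_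
  unfold levCount
  congr 1
  apply Finset.filter_congr
  intro i _
  have := one_le_lisFrom w i
  constructor <;> (intro h; omega)

lemma sum_lisFrom_eq (w : Equiv.Perm (Fin n)) :
    ∑ i, lisFrom w i = ∑ t ∈ Finset.range n, (t + 1) * levCount w t := by
  rw [← Finset.sum_fiberwise_of_maps_to
    (g := fun i : Fin n => lisFrom w i - 1) (t := Finset.range n)
    (by intro i _
        show lisFrom w i - 1 ∈ Finset.range n
        rw [Finset.mem_range]
        have := lisFrom_le_n w i
        have := one_le_lisFrom w i
        omega) (fun i => lisFrom w i)]
  refine Finset.sum_congr rfl fun t _ => ?_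
  have hfe : Finset.univ.filter (fun i : Fin n => lisFrom w i - 1 = t)
      = Finset.univ.filter (fun i : Fin n => lisFrom w i = t + 1) := by
    apply Finset.filter_congr
    intro i _
    have := one_le_lisFrom w i
    constructor <;> (intro h; omega)
  rw [hfe]
  rw [Finset.sum_congr rfl (fun i hi => (Finset.mem_filter.mp hi).2)]
  simp [levCount, mul_comm]

lemma levCount_eq_zero_of_le (w : Equiv.Perm (Fin n)) {t : ℕ} (h : n ≤ t) :
    levCount w t = 0 := by
  unfold levCount
  rw [Finset.card_eq_zero, Finset.filter_eq_empty_iff]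
  intro i _
  have := lisFrom_le_n w i
  omega

/-! ### counting pairs in a finset -/

lemma card_pairs_lt {α : Type*} [LinearOrder α] (F : Finset α) :
    ((F ×ˢ F).filter fun p => p.1 < p.2).card = F.card.choose 2 := by
  induction F using Finset.induction_on_max with
  | empty => simp
  | insert b F hb ih =>
    have hbF : b ∉ F := fun h => lt_irrefl b (hb b h)
    rw [Finset.card_insert_of_notMem hbF]
    have hsplit : ((insert b F ×ˢ insert b F).filter fun p => p.1 < p.2)
        = ((F ×ˢ F).filter fun p => p.1 < p.2) ∪ F.image (fun a => (a, b)) := by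
      ext p
      simp only [Finset.mem_filter, Finset.mem_union, Finset.mem_product,
        Finset.mem_insert, Finset.mem_image]
      constructor
      · rintro ⟨⟨h1 | h1, h2 | h2⟩, hlt⟩
        · exact absurd (h1 ▸ h2 ▸ hlt) (lt_irrefl _)
        · exact absurd (hb p.2 h2) (not_lt.mpr (le_of_lt (h1 ▸ hlt)))
        · right; exact ⟨p.1, h1, by rw [← h2]⟩
        · left; exact ⟨⟨h1, h2⟩, hlt⟩
      · rintro (⟨⟨h1, h2⟩, hlt⟩ | ⟨a, ha, hp⟩)
        · exact ⟨⟨Or.inr h1, Or.inr h2⟩, hlt⟩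
        · rw [← hp]; exact ⟨⟨Or.inr ha, Or.inl rfl⟩, hb a ha⟩
    rw [hsplit, Finset.card_union_of_disjoint, ih,
      Finset.card_image_of_injective _ (fun x y hxy => (Prod.mk.injEq _ _ _ _).mp hxy |>.1)]
    · rw [Nat.choose]
      rw [Nat.choose_one_right]
      ring
    · rw [Finset.disjoint_right]
      rintro p hp hp'
      simp only [Finset.mem_image] at hp
      obtain ⟨a, ha, rfl⟩ := hp
      simp only [Finset.mem_filter, Finset.mem_product] at hp'
      exact hbF hp'.1.2

/-! ### inversion lower bound -/

def invPairs (w : Equiv.Perm (Fin n)) : Finset (Fin n × Fin n) :=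
  Finset.univ.filter fun p : Fin n × Fin n => p.1 < p.2 ∧ w p.2 < w p.1

lemma invNum_eq (w : Equiv.Perm (Fin n)) : invNum w = (invPairs w).card := by
  unfold invNum invPairs
  congr 1

def samePairs (w : Equiv.Perm (Fin n)) : Finset (Fin n × Fin n) :=
  Finset.univ.filter fun p : Fin n × Fin n => p.1 < p.2 ∧ lisFrom w p.1 = lisFrom w p.2

lemma samePairs_subset (w : Equiv.Perm (Fin n)) : samePairs w ⊆ invPairs w := by
  intro p hp
  rw [samePairs, Finset.mem_filter] at hp
  rw [invPairs, Finset.mem_filter]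
  exact ⟨Finset.mem_univ _, hp.2.1, same_level_inv hp.2.1 hp.2.2⟩

lemma card_samePairs (w : Equiv.Perm (Fin n)) :
    (samePairs w).card = ∑ t ∈ Finset.range n, (levCount w t).choose 2 := by
  have hmap : ∀ p ∈ samePairs w, lisFrom w p.1 - 1 ∈ Finset.range n := by
    intro p _
    rw [Finset.mem_range]
    have := lisFrom_le_n w p.1
    have := one_le_lisFrom w p.1
    omega
  rw [Finset.card_eq_sum_card_fiberwise hmap]
  refine Finset.sum_congr rfl fun t _ => ?_
  have hfib : (samePairs w).filter (fun p => lisFrom w p.1 - 1 = t)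
      = (((Finset.univ.filter fun i : Fin n => lisFrom w i = t + 1) ×ˢ
          (Finset.univ.filter fun i : Fin n => lisFrom w i = t + 1)).filter
          fun p => p.1 < p.2) := by
    ext p
    simp only [samePairs, Finset.mem_filter, Finset.mem_product, Finset.mem_univ,
      true_and]
    constructor
    · rintro ⟨⟨hlt, heq⟩, ht⟩
      have h1 := one_le_lisFrom w p.1
      constructor
      · constructor <;> omega
      · exact hlt
    · rintro ⟨⟨h1, h2⟩, hlt⟩
      exact ⟨⟨hlt, by omega⟩, by omega⟩
  rw [hfib, card_pairs_lt]
  rfl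

lemma inv_lower_bound (w : Equiv.Perm (Fin n)) :
    ∑ t ∈ Finset.range n, (levCount w t).choose 2 ≤ invNum w := by
  rw [invNum_eq, ← card_samePairs]
  exact Finset.card_le_card (samePairs_subset w)

/-! ### numeric lemmas -/

lemma two_mul_choose_two (a : ℕ) : 2 * a.choose 2 = a * (a - 1) := by
  rw [Nat.choose_two_right, Nat.mul_div_cancel']
  rcases Nat.even_or_odd a with h | h
  · exact Dvd.dvd.mul_right h.two_dvd _
  · rcases a with _ | a
    · simp
    · have : Even a := by
        rcases Nat.even_or_odd a with h' | h'
        · exact h'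
        · exact absurd (h'.add_one) (by simpa using h)
      simpa using Dvd.dvd.mul_left this.two_dvd _

lemma key_ineq (c t k : ℕ) :
    ((k : ℤ) * c ≤ (c.choose 2 : ℤ) + (t + 1) * c + ((k - t).choose 2 : ℕ)) ∧
    (((k : ℤ) * c = (c.choose 2 : ℤ) + (t + 1) * c + ((k - t).choose 2 : ℕ)) ↔
      (k - t - 1 ≤ c ∧ c ≤ k - t)) := by
  have hc2 : (2 : ℤ) * (c.choose 2 : ℕ) = (c : ℤ) * ((c : ℤ) - 1) := by
    have h := two_mul_choose_two c
    rcases Nat.eq_zero_or_pos c with rfl | hc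
    · simp
    · have h2 : ((2 * c.choose 2 : ℕ) : ℤ) = ((c * (c - 1) : ℕ) : ℤ) := by
        exact_mod_cast congrArg (Nat.cast : ℕ → ℤ) h
      push_cast [Nat.cast_sub hc] at h2
      linarith
  rcases le_or_gt k t with hkt | hkt
  · have hs : k - t = 0 := by omega
    rw [hs]
    simp only [Nat.choose_zero_succ, Nat.choose]
    have h0 : ((Nat.choose 0 2 : ℕ) : ℤ) = 0 := by norm_num
    constructor
    · nlinarith [Nat.cast_nonneg (α := ℤ) (c.choose 2), Nat.cast_nonneg (α := ℤ) c,
        (by exact_mod_cast Nat.cast_le.mpr hkt : (k : ℤ) ≤ t)]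
    · constructor
      · intro h
        have hcz : (c : ℤ) = 0 := by
          nlinarith [Nat.cast_nonneg (α := ℤ) (c.choose 2), Nat.cast_nonneg (α := ℤ) c,
            (by exact_mod_cast Nat.cast_le.mpr hkt : (k : ℤ) ≤ t)]
        have : c = 0 := by exact_mod_cast hcz
        omega
      · intro ⟨h1, h2⟩
        have : c = 0 := by omega
        subst this
        norm_num
  · set s : ℕ := k - t with hs
    have hks : k = t + s := by omega
    have hs1 : 1 ≤ s := by omega
    have hs2 : (2 : ℤ) * (s.choose 2 : ℕ) = (s : ℤ) * ((s : ℤ) - 1) := by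
      have h := two_mul_choose_two s
      have h2 : ((2 * s.choose 2 : ℕ) : ℤ) = ((s * (s - 1) : ℕ) : ℤ) := by
        exact_mod_cast congrArg (Nat.cast : ℕ → ℤ) h
      push_cast [Nat.cast_sub hs1] at h2
      linarith
    have hkey : 2 * (((c.choose 2 : ℕ) : ℤ) + (t + 1) * c + ((s.choose 2 : ℕ) : ℤ)
        - (k : ℤ) * c) = ((c : ℤ) - s) * ((c : ℤ) - s + 1) := by
      have hk : (k : ℤ) = (t : ℤ) + s := by exact_mod_cast hks
      nlinarith [hc2, hs2]
    constructor
    · nlinarith [mul_self_nonneg ((c : ℤ) - s), hkey,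
        (by rcases le_or_gt (s : ℤ) c with h | h
            · nlinarith
            · nlinarith : (0 : ℤ) ≤ ((c : ℤ) - s) * ((c : ℤ) - s + 1))]
    · constructor
      · intro h
        have : ((c : ℤ) - s) * ((c : ℤ) - s + 1) = 0 := by linarith [hkey]
        rcases mul_eq_zero.mp this with h' | h'
        · have : c = s := by
            have : (c : ℤ) = s := by linarith
            exact_mod_cast this
          omega
        · have : c + 1 = s := by
            have : (c : ℤ) + 1 = s := by linarith
            exact_mod_cast this
          omega
      · intro ⟨h1, h2⟩
        have : ((c : ℤ) - s) * ((c : ℤ) - s + 1) = 0 := by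
          have : c = s - 1 ∨ c = s := by omega
          rcases this with h | h <;> subst h
          · push_cast [Nat.cast_sub hs1]
            ring
          · ring
        linarith [hkey]

lemma sum_choose_sub (k : ℕ) : ∀ m : ℕ, k ≤ m + 1 →
    ∑ t ∈ Finset.range m, (k - t).choose 2 = (k + 1).choose 3 := by
  induction k with
  | zero =>
    intro m _
    simp [Nat.choose_eq_zero_of_lt]
  | succ k ih =>
    intro m hm
    rcases Nat.eq_zero_or_pos m with rfl | hmpos
    · have hk0 : k = 0 := by omega
      subst hk0
      simp [Nat.choose_eq_zero_of_lt]
    · obtain ⟨m', rfl⟩ : ∃ m', m = m' + 1 := ⟨m - 1, by omega⟩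
      rw [Finset.sum_range_succ']
      have h1 : ∀ t ∈ Finset.range m', (k + 1 - (t + 1)).choose 2 = (k - t).choose 2 := by
        intro t _; congr 1; omega
      rw [Finset.sum_congr rfl h1, ih m' (by omega)]
      simp only [Nat.sub_zero]
      rw [show (k + 1 + 1).choose 3 = (k + 1).choose 2 + (k + 1).choose 3 from
        Nat.choose_succ_succ (k + 1) 2]
      omega

lemma k_le_n_succ {k n : ℕ} (hn : 0 < n) (hk : k.choose 2 ≤ n) : k ≤ n + 1 := by
  rcases le_or_gt k 2 with h | h
  · omega
  · have : k - 1 ≤ k.choose 2 := by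
      rw [Nat.choose_two_right]
      rw [Nat.le_div_iff_mul_le (by norm_num)]
      nlinarith
    omega

/-! ### master identity -/

lemma master_identity (w : Equiv.Perm (Fin n)) (k : ℕ) (hn : 0 < n) (hk : k ≤ n + 1) :
    (raj w : ℤ) - invNum w =
      (((n + 1).choose 2 : ℕ) : ℤ) - (k : ℤ) * n + (((k + 1).choose 3 : ℕ) : ℤ)
      - ((invNum w : ℤ) - ∑ t ∈ Finset.range n, (((levCount w t).choose 2 : ℕ) : ℤ))
      - ∑ t ∈ Finset.range n, ((((levCount w t).choose 2 : ℕ) : ℤ)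
          + ((t : ℤ) + 1) * (levCount w t) + (((k - t).choose 2 : ℕ) : ℤ)
          - (k : ℤ) * (levCount w t)) := by
  rw [raj_int]
  have h1 : (∑ i, (lisFrom w i : ℤ)) = ∑ t ∈ Finset.range n, ((t : ℤ) + 1) * levCount w t := by
    have := congrArg (Nat.cast : ℕ → ℤ) (sum_lisFrom_eq w)
    push_cast at this
    convert this using 2
  have h2 : (k : ℤ) * n = ∑ t ∈ Finset.range n, (k : ℤ) * levCount w t := by
    rw [← Finset.mul_sum]
    congr 1
    have := congrArg (Nat.cast : ℕ → ℤ) (sum_levCount w hn)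
    push_cast at this
    linarith
  have h3 : (((k + 1).choose 3 : ℕ) : ℤ) = ∑ t ∈ Finset.range n, (((k - t).choose 2 : ℕ) : ℤ) := by
    have := congrArg (Nat.cast : ℕ → ℤ) (sum_choose_sub k n hk)
    push_cast at this
    linarith
  have expand : ∑ t ∈ Finset.range n, ((((levCount w t).choose 2 : ℕ) : ℤ)
          + ((t : ℤ) + 1) * (levCount w t) + (((k - t).choose 2 : ℕ) : ℤ)
          - (k : ℤ) * (levCount w t))
      = (∑ t ∈ Finset.range n, (((levCount w t).choose 2 : ℕ) : ℤ))
        + (∑ t ∈ Finset.range n, ((t : ℤ) + 1) * (levCount w t))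
        + (∑ t ∈ Finset.range n, (((k - t).choose 2 : ℕ) : ℤ))
        - ∑ t ∈ Finset.range n, (k : ℤ) * (levCount w t) := by
    rw [← Finset.sum_add_distrib, ← Finset.sum_add_distrib, ← Finset.sum_sub_distrib]
  rw [h1]
  rw [expand, ← h2, ← h3]
  ring

lemma gapA_nonneg (w : Equiv.Perm (Fin n)) :
    0 ≤ (invNum w : ℤ) - ∑ t ∈ Finset.range n, (((levCount w t).choose 2 : ℕ) : ℤ) := by
  have hcast : ((∑ t ∈ Finset.range n, (levCount w t).choose 2 : ℕ) : ℤ)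
      ≤ (invNum w : ℤ) := by exact_mod_cast inv_lower_bound w
  push_cast at hcast
  linarith

lemma gapB_term_nonneg (w : Equiv.Perm (Fin n)) (k t : ℕ) :
    0 ≤ (((levCount w t).choose 2 : ℕ) : ℤ)
          + ((t : ℤ) + 1) * (levCount w t) + (((k - t).choose 2 : ℕ) : ℤ)
          - (k : ℤ) * (levCount w t) := by
  have := (key_ineq (levCount w t) t k).1
  linarith

lemma upper_bound (w : Equiv.Perm (Fin n)) (k : ℕ) (hn : 0 < n) (hk : k ≤ n + 1) :
    (raj w : ℤ) - invNum w ≤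
      (((n + 1).choose 2 : ℕ) : ℤ) - (k : ℤ) * n + (((k + 1).choose 3 : ℕ) : ℤ) := by
  rw [master_identity w k hn hk]
  have hA := gapA_nonneg w
  have hB : 0 ≤ ∑ t ∈ Finset.range n, ((((levCount w t).choose 2 : ℕ) : ℤ)
          + ((t : ℤ) + 1) * (levCount w t) + (((k - t).choose 2 : ℕ) : ℤ)
          - (k : ℤ) * (levCount w t)) :=
    Finset.sum_nonneg fun t _ => gapB_term_nonneg w k t
  linarith

lemma eq_iff_conditions (w : Equiv.Perm (Fin n)) (k : ℕ) (hn : 0 < n) (hk : k ≤ n + 1) :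
    ((raj w : ℤ) - invNum w =
      (((n + 1).choose 2 : ℕ) : ℤ) - (k : ℤ) * n + (((k + 1).choose 3 : ℕ) : ℤ)) ↔
    (invNum w = ∑ t ∈ Finset.range n, (levCount w t).choose 2) ∧
      ∀ t, t < n → (k - t - 1 ≤ levCount w t ∧ levCount w t ≤ k - t) := by
  rw [master_identity w k hn hk]
  have hA := gapA_nonneg w
  have hB : ∀ t ∈ Finset.range n, 0 ≤ ((((levCount w t).choose 2 : ℕ) : ℤ)
          + ((t : ℤ) + 1) * (levCount w t) + (((k - t).choose 2 : ℕ) : ℤ)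
          - (k : ℤ) * (levCount w t)) := fun t _ => gapB_term_nonneg w k t
  constructor
  · intro h
    have hsum : ((invNum w : ℤ) - ∑ t ∈ Finset.range n, (((levCount w t).choose 2 : ℕ) : ℤ))
        + ∑ t ∈ Finset.range n, ((((levCount w t).choose 2 : ℕ) : ℤ)
          + ((t : ℤ) + 1) * (levCount w t) + (((k - t).choose 2 : ℕ) : ℤ)
          - (k : ℤ) * (levCount w t)) = 0 := by linarith
    have hBsum : 0 ≤ ∑ t ∈ Finset.range n, ((((levCount w t).choose 2 : ℕ) : ℤ)
          + ((t : ℤ) + 1) * (levCount w t) + (((k - t).choose 2 : ℕ) : ℤ)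
          - (k : ℤ) * (levCount w t)) := Finset.sum_nonneg hB
    have hA0 : (invNum w : ℤ) - ∑ t ∈ Finset.range n, (((levCount w t).choose 2 : ℕ) : ℤ) = 0 := by
      linarith
    have hB0 : ∑ t ∈ Finset.range n, ((((levCount w t).choose 2 : ℕ) : ℤ)
          + ((t : ℤ) + 1) * (levCount w t) + (((k - t).choose 2 : ℕ) : ℤ)
          - (k : ℤ) * (levCount w t)) = 0 := by linarith
    constructor
    · have : (invNum w : ℤ) = ((∑ t ∈ Finset.range n, (levCount w t).choose 2 : ℕ) : ℤ) := by
        push_cast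
        linarith
      exact_mod_cast this
    · intro t ht
      have := (Finset.sum_eq_zero_iff_of_nonneg hB).mp hB0 t (Finset.mem_range.mpr ht)
      have heq : (k : ℤ) * (levCount w t) = (((levCount w t).choose 2 : ℕ) : ℤ)
          + ((t : ℤ) + 1) * (levCount w t) + (((k - t).choose 2 : ℕ) : ℤ) := by linarith
      exact (key_ineq (levCount w t) t k).2.mp heq
  · rintro ⟨h1, h2⟩
    have hA0 : (invNum w : ℤ) - ∑ t ∈ Finset.range n, (((levCount w t).choose 2 : ℕ) : ℤ) = 0 := by
      rw [h1]
      push_cast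
      ring
    have hB0 : ∑ t ∈ Finset.range n, ((((levCount w t).choose 2 : ℕ) : ℤ)
          + ((t : ℤ) + 1) * (levCount w t) + (((k - t).choose 2 : ℕ) : ℤ)
          - (k : ℤ) * (levCount w t)) = 0 := by
      apply Finset.sum_eq_zero
      intro t ht
      have := (key_ineq (levCount w t) t k).2.mpr (h2 t (Finset.mem_range.mp ht))
      linarith
    rw [hA0, hB0]
    ring

/-! ### psum and blockIdx -/

lemma psum_mono (a : ℕ → ℕ) : Monotone (psum a) := by
  intro m m' h
  exact Finset.sum_le_sum_of_subset (Finset.range_subset_range.mpr h)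

lemma psum_succ (a : ℕ → ℕ) (m : ℕ) : psum a (m + 1) = psum a m + a m :=
  Finset.sum_range_succ a m

lemma nat_lowerset_eq_range {S : Finset ℕ} (h : ∀ x ∈ S, ∀ y, y < x → y ∈ S) :
    S = Finset.range S.card := by
  ext x
  rw [Finset.mem_range]
  constructor
  · intro hx
    have hsub : Finset.range (x + 1) ⊆ S := by
      intro y hy
      rw [Finset.mem_range] at hy
      rcases Nat.lt_succ_iff_lt_or_eq.mp hy with h' | h'
      · exact h x hx y h'
      · exact h' ▸ hx
    have := Finset.card_le_card hsub
    rw [Finset.card_range] at this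
    omega
  · intro hx
    by_contra hmem
    have hsub : S ⊆ Finset.range x := by
      intro y hy
      rw [Finset.mem_range]
      rcases lt_trichotomy y x with h' | h' | h'
      · exact h'
      · exact absurd (h' ▸ hy) hmem
      · exact absurd (h y hy x h') hmem
    have := Finset.card_le_card hsub
    rw [Finset.card_range] at this
    omega

lemma fin_lowerset_mem_iff {T : Finset (Fin n)} (h : ∀ x ∈ T, ∀ y, y < x → y ∈ T) :
    ∀ x, x ∈ T ↔ (x : ℕ) < T.card := by
  intro x
  constructor
  · intro hx
    have hsub : Finset.Iic x ⊆ T := by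
      intro y hy
      rw [Finset.mem_Iic] at hy
      rcases eq_or_lt_of_le hy with h' | h'
      · exact h' ▸ hx
      · exact h x hx y h'
    have := Finset.card_le_card hsub
    rw [Fin.card_Iic] at this
    omega
  · intro hx
    by_contra hmem
    have hsub : T ⊆ Finset.Iio x := by
      intro y hy
      rw [Finset.mem_Iio]
      rcases lt_trichotomy y x with h' | h' | h'
      · exact h'
      · exact absurd (h' ▸ hy) hmem
      · exact absurd (h y hy x h') hmem
    have := Finset.card_le_card hsub
    rw [Fin.card_Iio] at this
    omega

lemma mem_iff_lt_card {w : Equiv.Perm (Fin n)} {S : Finset (Fin n)}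
    (h : ∀ i ∈ S, ∀ j, j ∉ S → w i < w j) (i : Fin n) :
    i ∈ S ↔ (w i : ℕ) < S.card := by
  set T : Finset (Fin n) := S.image w with hT
  have hcard : T.card = S.card := Finset.card_image_of_injective _ w.injective
  have hlow : ∀ x ∈ T, ∀ y, y < x → y ∈ T := by
    intro x hx y hy
    rw [hT, Finset.mem_image] at hx
    obtain ⟨i', hi', rfl⟩ := hx
    obtain ⟨j, rfl⟩ : ∃ j, w j = y := ⟨w.symm y, w.apply_symm_apply y⟩
    by_cases hj : j ∈ S
    · exact Finset.mem_image_of_mem w hj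
    · exact absurd (h i' hi' j hj) (not_lt.mpr (le_of_lt hy))
  have hmem : i ∈ S ↔ w i ∈ T := by
    constructor
    · exact Finset.mem_image_of_mem w
    · intro hwi
      rw [hT, Finset.mem_image] at hwi
      obtain ⟨j, hj, hji⟩ := hwi
      rwa [← w.injective hji]
  rw [hmem, fin_lowerset_mem_iff hlow, hcard]

lemma blockIdx_filter_eq (a : ℕ → ℕ) (v : Fin n) :
    (Finset.range n).filter (fun m => psum a (m + 1) ≤ (v : ℕ))
      = Finset.range (blockIdx n a v) := by
  apply nat_lowerset_eq_range
  intro x hx y hy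
  rw [Finset.mem_filter, Finset.mem_range] at hx ⊢
  exact ⟨by omega, le_trans (psum_mono a (by omega)) hx.2⟩

lemma psum_le_iff (a : ℕ → ℕ) (v : Fin n) {m : ℕ} (hm : m < n) :
    psum a (m + 1) ≤ (v : ℕ) ↔ m < blockIdx n a v := by
  have h := blockIdx_filter_eq a v
  constructor
  · intro hp
    have : m ∈ Finset.range (blockIdx n a v) := by
      rw [← h, Finset.mem_filter, Finset.mem_range]
      exact ⟨hm, hp⟩
    rwa [Finset.mem_range] at this
  · intro hp
    have : m ∈ (Finset.range n).filter (fun m => psum a (m + 1) ≤ (v : ℕ)) := by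
      rw [h, Finset.mem_range]
      exact hp
    rw [Finset.mem_filter] at this
    exact this.2

lemma blockIdx_le_n (a : ℕ → ℕ) (v : Fin n) : blockIdx n a v ≤ n := by
  unfold blockIdx
  calc ((Finset.range n).filter _).card ≤ (Finset.range n).card :=
        Finset.card_le_card (Finset.filter_subset _ _)
    _ = n := Finset.card_range n

lemma blockIdx_mono (a : ℕ → ℕ) {v v' : Fin n} (h : v ≤ v') :
    blockIdx n a v ≤ blockIdx n a v' := by
  unfold blockIdx
  apply Finset.card_le_card
  intro m hm
  rw [Finset.mem_filter] at hm ⊢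
  exact ⟨hm.1, le_trans hm.2 h⟩

section BlockStructure

variable {k : ℕ} {a : ℕ → ℕ}

lemma blockIdx_spec (hsum : psum a k = n) (hk : 1 ≤ k) (hkn : k ≤ n + 1) (v : Fin n) :
    psum a (blockIdx n a v) ≤ (v : ℕ) ∧ (v : ℕ) < psum a (blockIdx n a v + 1) := by
  set B := blockIdx n a v with hB
  constructor
  · rcases Nat.eq_zero_or_pos B with h0 | hpos
    · rw [h0]
      unfold psum
      simp
    · have hBn : B ≤ n := blockIdx_le_n a v
      have : B - 1 < n := by omega
      have := (psum_le_iff a v this).mpr (by omega)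
      have heq : B - 1 + 1 = B := by omega
      rwa [heq] at this
  · rcases lt_or_ge B n with h | h
    · by_contra hc
      push_neg at hc
      have := (psum_le_iff a v h).mp hc
      omega
    · have hBn : B = n := le_antisymm (blockIdx_le_n a v) h
      have : psum a k ≤ psum a (B + 1) := psum_mono a (by omega)
      have hv := v.isLt
      omega

lemma blockIdx_lt_k (hsum : psum a k = n) (hk : 1 ≤ k) (hkn : k ≤ n + 1) (v : Fin n) :
    blockIdx n a v < k := by
  have hspec := blockIdx_spec hsum hk hkn v
  by_contra hc
  push_neg at hc
  have : psum a k ≤ psum a (blockIdx n a v) := psum_mono a hc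
  have hv := v.isLt
  omega

lemma blockIdx_eq_iff (hsum : psum a k = n) (hk : 1 ≤ k) (hkn : k ≤ n + 1) (v : Fin n)
    (j : ℕ) : blockIdx n a v = j ↔ psum a j ≤ (v : ℕ) ∧ (v : ℕ) < psum a (j + 1) := by
  have hspec := blockIdx_spec hsum hk hkn v
  constructor
  · rintro rfl
    exact hspec
  · rintro ⟨h1, h2⟩
    set B := blockIdx n a v with hB
    rcases lt_trichotomy B j with h | h | h
    · have : psum a (B + 1) ≤ psum a j := psum_mono a (by omega)
      omega
    · exact h
    · have : psum a (j + 1) ≤ psum a B := psum_mono a (by omega)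
      omega

lemma card_blockIdx_eq (hsum : psum a k = n) (hk : 1 ≤ k) (hkn : k ≤ n + 1) (j : ℕ)
    (hj : j + 1 ≤ k) :
    (Finset.univ.filter fun v : Fin n => blockIdx n a v = j).card = a j := by
  have hpj : psum a (j + 1) ≤ n := by
    rw [← hsum]
    exact psum_mono a hj
  have : (Finset.univ.filter fun v : Fin n => blockIdx n a v = j)
      = (Finset.univ.filter fun v : Fin n => psum a j ≤ (v : ℕ) ∧ (v : ℕ) < psum a (j + 1)) := by
    apply Finset.filter_congr
    intro v _
    rw [blockIdx_eq_iff hsum hk hkn]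
  rw [this]
  rw [← Finset.card_image_of_injective _ Fin.val_injective]
  have hcard : (Finset.univ.filter fun v : Fin n =>
      psum a j ≤ (v : ℕ) ∧ (v : ℕ) < psum a (j + 1)).image Fin.val
      = (Finset.range n).filter (fun x => psum a j ≤ x ∧ x < psum a (j + 1)) := by
    ext x
    simp only [Finset.mem_image, Finset.mem_filter, Finset.mem_univ, true_and,
      Finset.mem_range]
    constructor
    · rintro ⟨v, hv, rfl⟩
      exact ⟨v.isLt, hv⟩
    · rintro ⟨hx, hx2⟩
      exact ⟨⟨x, hx⟩, hx2, rfl⟩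
  rw [hcard]
  have : (Finset.range n).filter (fun x => psum a j ≤ x ∧ x < psum a (j + 1))
      = Finset.Ico (psum a j) (psum a (j + 1)) := by
    ext x
    rw [Finset.mem_filter, Finset.mem_range, Finset.mem_Ico]
    omega
  rw [this, Nat.card_Ico]
  rw [psum_succ]
  omega

end BlockStructure

/-! ### the sorting key -/

def bkey (a : ℕ → ℕ) : Fin n → ℕ := fun v => n * blockIdx n a v + (n - 1 - (v : ℕ))

lemma layered_eq_sort (a : ℕ → ℕ) : layered n a = Tuple.sort (bkey a) := rfl

lemma bkey_lt_iff (a : ℕ → ℕ) (v v' : Fin n) :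
    bkey a v < bkey a v' ↔ (blockIdx n a v < blockIdx n a v' ∨
      (blockIdx n a v = blockIdx n a v' ∧ v' < v)) := by
  unfold bkey
  have h1 : (v : ℕ) < n := v.isLt
  have h2 : (v' : ℕ) < n := v'.isLt
  have h3 : blockIdx n a v ≤ blockIdx n a v' ∨ blockIdx n a v' ≤ blockIdx n a v := le_total _ _
  constructor
  · intro h
    rcases lt_trichotomy (blockIdx n a v) (blockIdx n a v') with h' | h' | h'
    · exact Or.inl h'
    · right
      refine ⟨h', ?_⟩
      rw [h'] at h
      have : (v' : ℕ) < (v : ℕ) := by omega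
      exact this
    · exfalso
      have : n * blockIdx n a v' + n ≤ n * blockIdx n a v := by
        calc n * blockIdx n a v' + n = n * (blockIdx n a v' + 1) := by ring
          _ ≤ n * blockIdx n a v := Nat.mul_le_mul_left n (by omega)
      omega
  · rintro (h | ⟨h, hv⟩)
    · have : n * blockIdx n a v + n ≤ n * blockIdx n a v' := by
        calc n * blockIdx n a v + n = n * (blockIdx n a v + 1) := by ring
          _ ≤ n * blockIdx n a v' := Nat.mul_le_mul_left n (by omega)
      omega
    · rw [h]
      have : (v' : ℕ) < (v : ℕ) := hv
      omega

lemma bkey_injective (a : ℕ → ℕ) : Function.Injective (bkey a : Fin n → ℕ) := by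
  intro v v' h
  rcases lt_trichotomy v v' with h' | h' | h'
  · exfalso
    rcases lt_or_ge (bkey a v) (bkey a v') with hk | hk
    · omega
    · rcases eq_or_lt_of_le hk with hk' | hk'
      · have := (bkey_lt_iff a v' v).mpr
        rcases le_or_gt (blockIdx n a v') (blockIdx n a v) with hb | hb
        · rcases eq_or_lt_of_le hb with hb' | hb'
          · have := (bkey_lt_iff a v' v).mpr (Or.inr ⟨hb', h'⟩)
            omega
          · have := (bkey_lt_iff a v' v).mpr (Or.inl hb')
            omega
        · have := (bkey_lt_iff a v v').mpr (Or.inl hb)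
          omega
      · omega
  · exact h'
  · exfalso
    rcases le_or_gt (blockIdx n a v) (blockIdx n a v') with hb | hb
    · rcases eq_or_lt_of_le hb with hb' | hb'
      · have := (bkey_lt_iff a v v').mpr (Or.inr ⟨hb', h'⟩)
        omega
      · have := (bkey_lt_iff a v v').mpr (Or.inl hb')
        omega
    · have := (bkey_lt_iff a v' v).mpr (Or.inl hb)
      omega

lemma strictMono_bkey_layered (a : ℕ → ℕ) :
    StrictMono (fun p : Fin n => bkey a (layered n a p)) := by
  have hmono : Monotone (bkey a ∘ (layered n a : Fin n → Fin n)) := by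
    rw [layered_eq_sort]
    exact Tuple.monotone_sort (bkey a)
  have hinj : Function.Injective (bkey a ∘ (layered n a : Fin n → Fin n)) :=
    (bkey_injective a).comp (layered n a).injective
  exact hmono.strictMono_of_injective hinj

/-! ### analysis of layered permutations -/

section LayeredAnalysis

variable {k : ℕ} {a : ℕ → ℕ}

lemma layered_block_le (a : ℕ → ℕ) {p q : Fin n} (h : p ≤ q) :
    blockIdx n a (layered n a p) ≤ blockIdx n a (layered n a q) := by
  rcases eq_or_lt_of_le h with h' | h'
  · rw [h']
  · have := strictMono_bkey_layered a h'
    rcases (bkey_lt_iff a _ _).mp this with h'' | h''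
    · exact le_of_lt h''
    · exact le_of_eq h''.1

lemma layered_same_block (a : ℕ → ℕ) {p q : Fin n} (h : p < q)
    (hb : blockIdx n a (layered n a p) = blockIdx n a (layered n a q)) :
    layered n a q < layered n a p := by
  have := strictMono_bkey_layered a h
  rcases (bkey_lt_iff a _ _).mp this with h'' | h''
  · omega
  · exact h''.2

lemma layered_pos_lt (a : ℕ → ℕ) {p q : Fin n}
    (hb : blockIdx n a (layered n a p) < blockIdx n a (layered n a q)) : p < q := by
  by_contra hc
  push_neg at hc
  have := layered_block_le a hc
  omega

lemma card_filter_perm (w : Equiv.Perm (Fin n)) (P : Fin n → Prop) [DecidablePred P] :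
    (Finset.univ.filter fun p => P (w p)).card = (Finset.univ.filter P).card := by
  apply Finset.card_bij' (i := fun p _ => w p) (j := fun v _ => w.symm v)
  · intro p hp
    rw [Finset.mem_filter] at hp ⊢
    exact ⟨Finset.mem_univ _, hp.2⟩
  · intro v hv
    rw [Finset.mem_filter] at hv ⊢
    refine ⟨Finset.mem_univ _, ?_⟩
    rw [Equiv.apply_symm_apply]
    exact hv.2
  · intro p _
    exact w.symm_apply_apply p
  · intro v _
    exact w.apply_symm_apply v

lemma lisFrom_layered (hsum : psum a k = n) (hk : 1 ≤ k) (hkn : k ≤ n + 1)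
    (hbd : ∀ j, j < k → j ≤ a j) (p : Fin n) :
    lisFrom (layered n a) p = k - blockIdx n a (layered n a p) := by
  set w := layered n a with hw
  apply le_antisymm
  · obtain ⟨s, hs, hcard⟩ := exists_goodSet w p
    rw [← hcard]
    have hinj : Set.InjOn (fun x => blockIdx n a (w x)) s := by
      intro x hx y hy hxy
      by_contra hne
      rcases lt_trichotomy x y with h' | h' | h'
      · exact absurd (layered_same_block a h' hxy) (not_lt.mpr (le_of_lt (hs.2.2 x hx y hy h')))
      · exact hne h'
      · exact absurd (layered_same_block a h' hxy.symm) (not_lt.mpr (le_of_lt (hs.2.2 y hy x hx h')))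
    have himg : s.image (fun x => blockIdx n a (w x)) ⊆
        Finset.Icc (blockIdx n a (w p)) (k - 1) := by
      intro b hb
      rw [Finset.mem_image] at hb
      obtain ⟨x, hx, rfl⟩ := hb
      rw [Finset.mem_Icc]
      constructor
      · exact layered_block_le a (hs.2.1 x hx)
      · have := blockIdx_lt_k hsum hk hkn (w x)
        omega
    calc s.card = (s.image (fun x => blockIdx n a (w x))).card :=
          (Finset.card_image_of_injOn hinj).symm
      _ ≤ (Finset.Icc (blockIdx n a (w p)) (k - 1)).card := Finset.card_le_card himg
      _ = k - 1 + 1 - blockIdx n a (w p) := Nat.card_Icc _ _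
      _ = k - blockIdx n a (w p) := by omega
  · have hgen : ∀ m, ∀ q : Fin n, k - blockIdx n a (w q) = m → m ≤ lisFrom w q := by
      intro m
      induction m using Nat.strong_induction_on with
      | _ m ih =>
        intro q hm
        rcases le_or_gt m 1 with h1 | h1
        · exact le_trans h1 (one_le_lisFrom w q)
        · set B := blockIdx n a (w q) with hB
          have hBk : B < k := blockIdx_lt_k hsum hk hkn (w q)
          have hB2 : B + 2 ≤ k := by omega
          have ha1 : 1 ≤ a (B + 1) := le_trans (by omega) (hbd (B + 1) (by omega))
          have hv : psum a (B + 1) < n := by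
            have h1 : psum a (B + 1) + 1 ≤ psum a (B + 2) := by
              rw [psum_succ a (B + 1)]
              omega
            have h2 : psum a (B + 2) ≤ psum a k := psum_mono a hB2
            omega
          set v' : Fin n := ⟨psum a (B + 1), hv⟩ with hv'
          set q' := w.symm v' with hq'
          have hwq : w q' = v' := w.apply_symm_apply v'
          have hBq : blockIdx n a v' = B + 1 := by
            rw [blockIdx_eq_iff hsum hk hkn]
            refine ⟨le_rfl, ?_⟩
            show psum a (B + 1) < psum a (B + 2)
            rw [psum_succ a (B + 1)]
            omega
          have hpq : q < q' := by
            apply layered_pos_lt a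
            rw [← hw, hwq, hBq]
            omega
          have hwpq : w q < w q' := by
            have := (blockIdx_spec hsum hk hkn (w q)).2
            rw [hwq]
            show ((w q : Fin n) : ℕ) < psum a (B + 1)
            exact this
          have hlt := lisFrom_lt hpq hwpq
          have hih := ih (m - 1) (by omega) q' (by rw [hwq, hBq]; omega)
          omega
    exact hgen (k - blockIdx n a (w p)) p rfl

lemma levCount_layered (hsum : psum a k = n) (hk : 1 ≤ k) (hkn : k ≤ n + 1)
    (hbd : ∀ j, j < k → j ≤ a j) (t : ℕ) :
    levCount (layered n a) t = if t < k then a (k - 1 - t) else 0 := by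
  set w := layered n a with hw
  rcases lt_or_ge t k with ht | ht
  · rw [if_pos ht]
    unfold levCount
    have hfe : (Finset.univ.filter fun i : Fin n => lisFrom w i = t + 1)
        = Finset.univ.filter fun i : Fin n => blockIdx n a (w i) = k - 1 - t := by
      apply Finset.filter_congr
      intro i _
      rw [hw, lisFrom_layered hsum hk hkn hbd i]
      have := blockIdx_lt_k hsum hk hkn (layered n a i)
      constructor <;> (intro h; omega)
    rw [hfe]
    exact (card_filter_perm w (fun v => blockIdx n a v = k - 1 - t)).trans
      (card_blockIdx_eq hsum hk hkn (k - 1 - t) (by omega))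
  · rw [if_neg (by omega)]
    unfold levCount
    rw [Finset.card_eq_zero, Finset.filter_eq_empty_iff]
    intro i _
    rw [hw, lisFrom_layered hsum hk hkn hbd i]
    omega

lemma invPairs_layered (hsum : psum a k = n) (hk : 1 ≤ k) (hkn : k ≤ n + 1)
    (hbd : ∀ j, j < k → j ≤ a j) :
    invPairs (layered n a) = samePairs (layered n a) := by
  set w := layered n a with hw
  apply le_antisymm
  · intro p hp
    rw [invPairs, Finset.mem_filter] at hp
    rw [samePairs, Finset.mem_filter]
    refine ⟨Finset.mem_univ _, hp.2.1, ?_⟩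
    have h1 : blockIdx n a (w p.2) ≤ blockIdx n a (w p.1) :=
      blockIdx_mono a (le_of_lt hp.2.2)
    have h2 : blockIdx n a (w p.1) ≤ blockIdx n a (w p.2) :=
      layered_block_le a (le_of_lt hp.2.1)
    rw [hw, lisFrom_layered hsum hk hkn hbd, lisFrom_layered hsum hk hkn hbd]
    rw [← hw]
    omega
  · exact samePairs_subset w

lemma layered_achieves (hsum : psum a k = n) (hk : 1 ≤ k) (hkn : k ≤ n + 1) (hn : 0 < n)
    (hbd : ∀ j, j < k → j ≤ a j ∧ a j ≤ j + 1) :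
    (raj (layered n a) : ℤ) - invNum (layered n a) =
      (((n + 1).choose 2 : ℕ) : ℤ) - (k : ℤ) * n + (((k + 1).choose 3 : ℕ) : ℤ) := by
  set w := layered n a with hw
  have hbd1 : ∀ j, j < k → j ≤ a j := fun j hj => (hbd j hj).1
  rw [eq_iff_conditions w k hn hkn]
  constructor
  · rw [invNum_eq, invPairs_layered hsum hk hkn hbd1, card_samePairs]
  · intro t ht
    rw [levCount_layered hsum hk hkn hbd1 t]
    rcases lt_or_ge t k with h | h
    · rw [if_pos h]
      have := hbd (k - 1 - t) (by omega)
      omega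
    · rw [if_neg (by omega)]
      omega

end LayeredAnalysis

/-! ### equality implies layered -/

section EqualityCase

variable {k : ℕ} {w : Equiv.Perm (Fin n)}

lemma lisFrom_le_k (hn : 0 < n)
    (hcond : ∀ t, t < n → k - t - 1 ≤ levCount w t ∧ levCount w t ≤ k - t) (i : Fin n) :
    lisFrom w i ≤ k := by
  by_contra hc
  push_neg at hc
  have h1 := one_le_lisFrom w i
  have h2 := lisFrom_le_n w i
  set t := lisFrom w i - 1 with ht
  have htn : t < n := by omega
  have hpos : 0 < levCount w t := by
    rw [levCount, Finset.card_pos]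
    exact ⟨i, Finset.mem_filter.mpr ⟨Finset.mem_univ _, by omega⟩⟩
  have := (hcond t htn).2
  omega

lemma inv_eq_same (hinv : invNum w = ∑ t ∈ Finset.range n, (levCount w t).choose 2) :
    invPairs w = samePairs w := by
  apply (Finset.eq_of_subset_of_card_le (samePairs_subset w) ?_).symm
  rw [← invNum_eq, hinv, card_samePairs]

lemma cross_level (hinv : invPairs w = samePairs w) {i j : Fin n}
    (h : lisFrom w i < lisFrom w j) : w j < w i := by
  rcases lt_trichotomy (w j) (w i) with h' | h' | h'
  · exact h'
  · exact absurd (w.injective h') (by intro he; rw [he] at h; omega)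
  · exfalso
    rcases lt_trichotomy i j with h'' | h'' | h''
    · have := lisFrom_lt h'' h'
      omega
    · rw [h''] at h; omega
    · have hmem : (j, i) ∈ invPairs w :=
        Finset.mem_filter.mpr ⟨Finset.mem_univ _, h'', h'⟩
      rw [hinv, samePairs, Finset.mem_filter] at hmem
      have := hmem.2.2
      simp only at this
      omega

lemma pos_level_mono (hinv : invPairs w = samePairs w) {i j : Fin n} (h : i < j) :
    lisFrom w j ≤ lisFrom w i := by
  by_contra hc
  push_neg at hc
  have := cross_level hinv hc
  have hmem : (i, j) ∈ invPairs w :=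
    Finset.mem_filter.mpr ⟨Finset.mem_univ _, h, this⟩
  rw [hinv, samePairs, Finset.mem_filter] at hmem
  have := hmem.2.2
  simp only at this
  omega

/-- The block sizes extracted from the level statistics. -/
def aOf (w : Equiv.Perm (Fin n)) (k : ℕ) : ℕ → ℕ :=
  fun j => if j < k then levCount w (k - 1 - j) else 0

lemma aOf_card_S (hn : 0 < n) (hk : 1 ≤ k)
    (hcond : ∀ t, t < n → k - t - 1 ≤ levCount w t ∧ levCount w t ≤ k - t) :
    ∀ m : ℕ, (Finset.univ.filter fun i : Fin n => k ≤ lisFrom w i + m).card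
      = psum (aOf w k) (m + 1) := by
  have hLk := lisFrom_le_k hn hcond
  intro m
  induction m with
  | zero =>
    have h1 : (Finset.univ.filter fun i : Fin n => k ≤ lisFrom w i + 0)
        = Finset.univ.filter fun i : Fin n => lisFrom w i = (k - 1) + 1 := by
      apply Finset.filter_congr
      intro i _
      have := hLk i
      constructor <;> (intro h; omega)
    rw [h1]
    have : psum (aOf w k) 1 = aOf w k 0 := by
      rw [psum_succ]
      unfold psum
      simp
    rw [this]
    unfold aOf
    rw [if_pos (by omega : 0 < k)]
    simp only [Nat.sub_zero]
    rfl
  | succ m ih =>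
    have hsplit : (Finset.univ.filter fun i : Fin n => k ≤ lisFrom w i + (m + 1))
        = (Finset.univ.filter fun i : Fin n => k ≤ lisFrom w i + m)
          ∪ (Finset.univ.filter fun i : Fin n => lisFrom w i + m + 1 = k) := by
      ext i
      simp only [Finset.mem_union, Finset.mem_filter, Finset.mem_univ, true_and]
      omega
    have hdisj : Disjoint (Finset.univ.filter fun i : Fin n => k ≤ lisFrom w i + m)
        (Finset.univ.filter fun i : Fin n => lisFrom w i + m + 1 = k) := by
      rw [Finset.disjoint_left]
      intro i hi hi'
      rw [Finset.mem_filter] at hi hi'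
      omega
    rw [hsplit, Finset.card_union_of_disjoint hdisj, ih]
    have hlast : (Finset.univ.filter fun i : Fin n => lisFrom w i + m + 1 = k).card
        = aOf w k (m + 1) := by
      rcases lt_or_ge (m + 1) k with h | h
      · have heq : (Finset.univ.filter fun i : Fin n => lisFrom w i + m + 1 = k)
            = Finset.univ.filter fun i : Fin n => lisFrom w i = (k - 1 - (m + 1)) + 1 := by
          apply Finset.filter_congr
          intro i _
          constructor <;> (intro hh; omega)
        rw [heq]
        unfold aOf
        rw [if_pos h]
        rfl
      · have heq : (Finset.univ.filter fun i : Fin n => lisFrom w i + m + 1 = k) = ∅ := by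
          rw [Finset.filter_eq_empty_iff]
          intro i _
          have := one_le_lisFrom w i
          omega
        rw [heq]
        unfold aOf
        rw [if_neg (by omega)]
        rfl
    rw [hlast, ← psum_succ]

lemma blockIdx_aOf (hn : 0 < n) (hk : 1 ≤ k) (hkn : k ≤ n + 1)
    (hinv : invPairs w = samePairs w)
    (hcond : ∀ t, t < n → k - t - 1 ≤ levCount w t ∧ levCount w t ≤ k - t) (i : Fin n) :
    blockIdx n (aOf w k) (w i) = k - lisFrom w i := by
  have hLk := lisFrom_le_k hn hcond
  have hcardS := aOf_card_S hn hk hcond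
  have hseg : ∀ m : ℕ, ∀ i : Fin n,
      (i ∈ Finset.univ.filter fun i : Fin n => k ≤ lisFrom w i + m)
        ↔ (w i : ℕ) < (Finset.univ.filter fun i : Fin n => k ≤ lisFrom w i + m).card := by
    intro m
    apply mem_iff_lt_card
    intro x hx y hy
    rw [Finset.mem_filter] at hx
    have hy' : ¬ (k ≤ lisFrom w y + m) := by
      intro hc
      exact hy (Finset.mem_filter.mpr ⟨Finset.mem_univ _, hc⟩)
    exact cross_level hinv (by omega)
  have hstep : ∀ m, m < n → (psum (aOf w k) (m + 1) ≤ (w i : ℕ) ↔ m < k - lisFrom w i) := by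
    intro m _
    rw [← hcardS m]
    have h1 := hseg m i
    rw [Finset.mem_filter] at h1
    have h2 := one_le_lisFrom w i
    have h3 := hLk i
    constructor
    · intro hle
      have hnlt : ¬ ((w i : ℕ) < (Finset.univ.filter fun i : Fin n => k ≤ lisFrom w i + m).card) :=
        by omega
      have hni : ¬ (k ≤ lisFrom w i + m) := fun hc => hnlt (h1.mp ⟨Finset.mem_univ _, hc⟩)
      omega
    · intro hlt
      have hni : ¬ (k ≤ lisFrom w i + m) := by omega
      have hnlt : ¬ ((w i : ℕ) < (Finset.univ.filter fun i : Fin n => k ≤ lisFrom w i + m).card) :=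
        fun hc => hni (h1.mpr hc).2
      omega
  unfold blockIdx
  have hfe : (Finset.range n).filter (fun m => psum (aOf w k) (m + 1) ≤ ((w i : Fin n) : ℕ))
      = Finset.range (k - lisFrom w i) := by
    ext m
    simp only [Finset.mem_filter, Finset.mem_range]
    have h2 := one_le_lisFrom w i
    constructor
    · rintro ⟨hm, hle⟩
      exact (hstep m hm).mp hle
    · intro hm
      have hmn : m < n := by omega
      exact ⟨hmn, (hstep m hmn).mpr hm⟩
  rw [hfe, Finset.card_range]

lemma eq_implies_layered (hn : 0 < n) (hk : 1 ≤ k) (hkn : k ≤ n + 1)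
    (hinv : invNum w = ∑ t ∈ Finset.range n, (levCount w t).choose 2)
    (hcond : ∀ t, t < n → k - t - 1 ≤ levCount w t ∧ levCount w t ≤ k - t) :
    w = layered n (aOf w k) := by
  have hIS := inv_eq_same hinv
  have hLk := lisFrom_le_k hn hcond
  have hblock := blockIdx_aOf hn hk hkn hIS hcond
  have hsm : StrictMono (fun p : Fin n => bkey (aOf w k) (w p)) := by
    intro p q hpq
    show bkey (aOf w k) (w p) < bkey (aOf w k) (w q)
    rw [bkey_lt_iff]
    rcases eq_or_ne (lisFrom w p) (lisFrom w q) with he | hne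
    · right
      rw [hblock p, hblock q, he]
      exact ⟨rfl, same_level_inv hpq he⟩
    · left
      have h1 : lisFrom w q ≤ lisFrom w p := pos_level_mono hIS hpq
      have h2 : lisFrom w q < lisFrom w p := by omega
      rw [hblock p, hblock q]
      have := one_le_lisFrom w q
      have := hLk p
      omega
  rw [layered_eq_sort]
  rw [Tuple.eq_sort_iff]
  constructor
  · exact hsm.monotone
  · intro i j hij heq
    exfalso
    have := hsm hij
    simp only at this
    omega

end EqualityCase

section FinalAssembly

variable {k : ℕ} {w : Equiv.Perm (Fin n)}

lemma aOf_bounds (hkn : k ≤ n + 1)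
    (hcond : ∀ t, t < n → k - t - 1 ≤ levCount w t ∧ levCount w t ≤ k - t) :
    ∀ j, j < k → j ≤ aOf w k j ∧ aOf w k j ≤ j + 1 := by
  intro j hj
  unfold aOf
  rw [if_pos hj]
  rcases lt_or_ge (k - 1 - j) n with h | h
  · have := hcond (k - 1 - j) h
    omega
  · have := levCount_eq_zero_of_le w h
    omega

lemma aOf_sum (hn : 0 < n) (hk : 1 ≤ k) (hkn : k ≤ n + 1)
    (hcond : ∀ t, t < n → k - t - 1 ≤ levCount w t ∧ levCount w t ≤ k - t) :
    ∑ j ∈ Finset.range k, aOf w k j = n := by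
  have h1 : ∑ j ∈ Finset.range k, aOf w k j = ∑ j ∈ Finset.range k, levCount w (k - 1 - j) := by
    refine Finset.sum_congr rfl fun j hj => ?_
    rw [Finset.mem_range] at hj
    unfold aOf
    rw [if_pos hj]
  rw [h1, Finset.sum_range_reflect (fun t => levCount w t) k]
  rcases le_or_gt k n with hkle | hkgt
  · have hsplit : ∑ t ∈ Finset.range n, levCount w t
        = ∑ t ∈ Finset.range k, levCount w t + ∑ t ∈ Finset.Ico k n, levCount w t := by
      rw [Finset.range_eq_Ico, Finset.range_eq_Ico]
      exact (Finset.sum_Ico_consecutive (fun t => levCount w t) (Nat.zero_le k) hkle).symm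
    have hzero : ∑ t ∈ Finset.Ico k n, levCount w t = 0 := by
      apply Finset.sum_eq_zero
      intro t ht
      rw [Finset.mem_Ico] at ht
      have := (hcond t ht.2).2
      omega
    have := sum_levCount w hn
    omega
  · have hkeq : k = n + 1 := by omega
    subst hkeq
    rw [Finset.sum_range_succ, levCount_eq_zero_of_le w (le_refl n), sum_levCount w hn]
    omega

end FinalAssembly

/-- for `C(k,2) ≤ n ≤ C(k+1,2)`, the maximum of `raj(w) − inv(w)` over
`w ∈ S_n` is `C(n+1,2) − k·n + C(k+1,3)`, attained exactly at the layered permutations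
with block sizes `(a 0, …, a (k-1))` satisfying `j ≤ a j ≤ j + 1` (0-based; i.e.
`j − 1 ≤ α_j ≤ j` 1-based, the first size being allowed to equal `0`) and `Σ a j = n`. -/
theorem max_raj_sub_inv (n k : ℕ) (hn : 0 < n)
    (hk1 : Nat.choose k 2 ≤ n) (hk2 : n ≤ Nat.choose (k + 1) 2) :
    (∀ w : Equiv.Perm (Fin n),
        (raj w : ℤ) - (invNum w : ℤ) ≤
          ((n + 1).choose 2 : ℤ) - (k : ℤ) * (n : ℤ) + ((k + 1).choose 3 : ℤ)) ∧
    (∀ w : Equiv.Perm (Fin n),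
        ((raj w : ℤ) - (invNum w : ℤ) =
            ((n + 1).choose 2 : ℤ) - (k : ℤ) * (n : ℤ) + ((k + 1).choose 3 : ℤ)) ↔
          ∃ a : ℕ → ℕ,
            (∀ j : ℕ, j < k → j ≤ a j ∧ a j ≤ j + 1) ∧
            (∀ j : ℕ, k ≤ j → a j = 0) ∧
            (∑ j ∈ Finset.range k, a j) = n ∧
            w = layered n a) := by
  have hk : 1 ≤ k := by
    by_contra hc
    push_neg at hc
    have hk0 : k = 0 := by omega
    subst hk0
    simp [Nat.choose_one_right] at hk2
    omega
  have hkn : k ≤ n + 1 := k_le_n_succ hn hk1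
  constructor
  · intro w
    exact upper_bound w k hn hkn
  · intro w
    constructor
    · intro heq
      obtain ⟨hinv, hcond⟩ := (eq_iff_conditions w k hn hkn).mp heq
      refine ⟨aOf w k, aOf_bounds hkn hcond, ?_, aOf_sum hn hk hkn hcond,
        eq_implies_layered hn hk hkn hinv hcond⟩
      intro j hj
      unfold aOf
      rw [if_neg (by omega)]
    · rintro ⟨a, hbd, _hzero, hsum, rfl⟩
      exact layered_achieves hsum hk hkn hn hbd

end RajRegularity
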